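/- Let P(x,t) be a monic polynomial in t of degree d ≥ 1 with coefficients in ℂ[x₁,…,x_k], and let q > 0. Then the following are equivalent: (1) there exist R, C > 0 such that every zero (x,t) of P with |x| ≥ R satisfies |t| ≤ C|x|^q; (2) q ≥ δ(P), where δ(P) = max_j deg(a_j)/j. -/

import Mathlib

open MvPolynomial Polynomial Finset Filter

namespace PloskiAux

lemma growth (k : ℕ) (p : MvPolynomial (Fin k) ℂ) :
    ∃ M : ℝ, 0 < M ∧ ∀ x : Fin k → ℂ, 1 ≤ ‖x‖ →
      ‖MvPolynomial.eval x p‖ ≤ M * ‖x‖ ^ p.totalDegree := by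
  refine ⟨1 + ∑ d ∈ p.support, ‖p.coeff d‖, by positivity, fun x hx => ?_⟩
  have hx0 : (0:ℝ) ≤ ‖x‖ := norm_nonneg _
  rw [MvPolynomial.eval_eq]
  calc ‖∑ d ∈ p.support, p.coeff d * ∏ i ∈ d.support, x i ^ d i‖
      ≤ ∑ d ∈ p.support, ‖p.coeff d * ∏ i ∈ d.support, x i ^ d i‖ := norm_sum_le _ _
    _ ≤ ∑ d ∈ p.support, ‖p.coeff d‖ * ‖x‖ ^ p.totalDegree := by
        refine Finset.sum_le_sum fun d hd => ?_
        rw [norm_mul]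
        refine mul_le_mul_of_nonneg_left ?_ (norm_nonneg _)
        calc ‖∏ i ∈ d.support, x i ^ d i‖ = ∏ i ∈ d.support, ‖x i‖ ^ d i := by
              rw [norm_prod]; simp
          _ ≤ ∏ i ∈ d.support, ‖x‖ ^ d i := by
              refine Finset.prod_le_prod (fun i _ => by positivity) fun i _ => ?_
              exact pow_le_pow_left₀ (norm_nonneg _) (norm_le_pi_norm x i) _
          _ = ‖x‖ ^ (∑ i ∈ d.support, d i) := Finset.prod_pow_eq_pow_sum _ _ _
          _ ≤ ‖x‖ ^ p.totalDegree := pow_le_pow_right₀ hx (MvPolynomial.le_totalDegree hd)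
    _ = (∑ d ∈ p.support, ‖p.coeff d‖) * ‖x‖ ^ p.totalDegree := by rw [Finset.sum_mul]
    _ ≤ (1 + ∑ d ∈ p.support, ‖p.coeff d‖) * ‖x‖ ^ p.totalDegree := by
        have : (0:ℝ) ≤ ‖x‖ ^ p.totalDegree := by positivity
        nlinarith

/-- Cauchy-type root bound. -/
lemma rootbound (d : ℕ) (hd : 0 < d) (c : Fin d → ℂ) (t : ℂ)
    (ht : t ^ d + ∑ i : Fin d, c i * t ^ (d - 1 - i.1) = 0) (h1 : 1 ≤ ‖t‖) :
    ∃ i : Fin d, ‖t‖ ^ (i.1 + 1) ≤ d * ‖c i‖ := by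
  by_contra hcon
  push_neg at hcon
  have ht0 : (0:ℝ) < ‖t‖ := lt_of_lt_of_le one_pos h1
  have key : ‖t‖ ^ d < ‖t‖ ^ d := by
    calc ‖t‖ ^ d = ‖∑ i : Fin d, c i * t ^ (d - 1 - i.1)‖ := by
          rw [← norm_pow, eq_neg_of_add_eq_zero_left ht, norm_neg]
      _ ≤ ∑ i : Fin d, ‖c i‖ * ‖t‖ ^ (d - 1 - i.1) := by
          refine (norm_sum_le _ _).trans_eq ?_
          simp [norm_mul]
      _ < ∑ i : Fin d, (‖t‖ ^ (i.1 + 1) / d) * ‖t‖ ^ (d - 1 - i.1) := by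
          refine Finset.sum_lt_sum_of_nonempty ⟨⟨0, hd⟩, Finset.mem_univ _⟩ fun i _ => ?_
          have h := hcon i
          have : ‖c i‖ < ‖t‖ ^ (i.1 + 1) / d := by
            rw [lt_div_iff₀ (by exact_mod_cast hd)]
            nlinarith [hcon i]
          exact mul_lt_mul_of_pos_right this (by positivity)
      _ = ∑ _i : Fin d, ‖t‖ ^ d / d := by
          refine Finset.sum_congr rfl fun i _ => ?_
          rw [div_mul_eq_mul_div, ← pow_add]
          congr 2
          omega
      _ = ‖t‖ ^ d := by
          rw [Finset.sum_const, Finset.card_univ, Fintype.card_fin, nsmul_eq_mul]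
          field_simp
  exact lt_irrefl _ key

/-- choose d m ≤ 2 ^ d -/
lemma choose_le (d m : ℕ) : d.choose m ≤ 2 ^ d := by
  rcases le_or_gt m d with h | h
  · calc d.choose m ≤ ∑ j ∈ range (d+1), d.choose j :=
        Finset.single_le_sum (fun j _ => Nat.zero_le _) (Finset.mem_range.mpr (by omega))
      _ = 2 ^ d := Nat.sum_range_choose d
  · simp [Nat.choose_eq_zero_of_lt h]

lemma multiset_prod_norm_le (t : Multiset ℂ) (b : ℝ) (hb : 0 ≤ b)
    (h : ∀ z ∈ t, ‖z‖ ≤ b) : ‖t.prod‖ ≤ b ^ (Multiset.card t) := by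
  induction t using Multiset.induction_on with
  | empty => simp
  | cons z s ih =>
      simp only [Multiset.prod_cons, Multiset.card_cons, norm_mul, pow_succ']
      have hz := h z (Multiset.mem_cons_self z s)
      have hs := ih fun w hw => h w (Multiset.mem_cons_of_mem hw)
      exact mul_le_mul hz hs (norm_nonneg _) hb

lemma esymm_bound (s : Multiset ℂ) (b : ℝ) (hb : 0 ≤ b)
    (h : ∀ z ∈ s, ‖z‖ ≤ b) (m : ℕ) :
    ‖s.esymm m‖ ≤ ((Multiset.card s).choose m : ℝ) * b ^ m := by
  rw [Multiset.esymm]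
  calc ‖((s.powersetCard m).map Multiset.prod).sum‖
      ≤ (((s.powersetCard m).map Multiset.prod).map norm).sum := norm_multiset_sum_le _
    _ ≤ (Multiset.card (((s.powersetCard m).map Multiset.prod).map norm)) • (b ^ m) := by
        refine Multiset.sum_le_card_nsmul _ _ ?_
        intro r hr
        simp only [Multiset.mem_map] at hr
        obtain ⟨t, ht, rfl⟩ := hr
        obtain ⟨t', ht', rfl⟩ := ht
        obtain ⟨hle, hcard⟩ := Multiset.mem_powersetCard.mp ht'
        rw [← hcard]
        exact multiset_prod_norm_le _ _ hb fun z hz => h z (Multiset.mem_of_le hle hz)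
    _ = ((Multiset.card s).choose m : ℝ) * b ^ m := by
        simp [Multiset.card_powersetCard, nsmul_eq_mul]


lemma eval_smul {k n : ℕ} {h : MvPolynomial (Fin k) ℂ}
    (hh : h.IsHomogeneous n) (s : ℂ) (v : Fin k → ℂ) :
    MvPolynomial.eval (s • v) h = s ^ n * MvPolynomial.eval v h := by
  rw [MvPolynomial.eval_eq, MvPolynomial.eval_eq, Finset.mul_sum]
  refine Finset.sum_congr rfl fun d hd => ?_
  have hdeg : (∑ i ∈ d.support, d i) = n := by
    have := hh (MvPolynomial.mem_support_iff.mp hd)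
    change Finsupp.weight (fun _ => 1) d = n at this
    rw [← Finsupp.degree_eq_weight_one] at this
    exact this
  have : ∏ i ∈ d.support, (s • v) i ^ d i
      = s ^ n * ∏ i ∈ d.support, v i ^ d i := by
    simp only [Pi.smul_apply, smul_eq_mul, mul_pow]
    rw [Finset.prod_mul_distrib, Finset.prod_pow_eq_pow_sum, hdeg]
  rw [this]; ring

/-- Univariate degree bound from growth. -/
lemma uni_deg_le (Q : Polynomial ℂ) (CC RR m : ℝ) (hQ0 : Q ≠ 0)
    (hb : ∀ r : ℝ, RR ≤ r → ‖Q.eval (r : ℂ)‖ ≤ CC * r ^ m) :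
    (Q.natDegree : ℝ) ≤ m := by
  by_contra hcon
  push_neg at hcon
  set n := Q.natDegree with hn
  set B := ∑ j ∈ range n, ‖Q.coeff j‖ with hB
  have hBnn : 0 ≤ B := Finset.sum_nonneg fun j _ => norm_nonneg _
  have hlead : 0 < ‖Q.leadingCoeff‖ := by
    simpa [norm_pos_iff] using Polynomial.leadingCoeff_ne_zero.mpr hQ0
  have htend : Tendsto (fun r : ℝ => CC * r ^ (m - (n:ℝ)) + B * r⁻¹) atTop (nhds 0) := by
    have h1 : Tendsto (fun r : ℝ => r ^ (m - (n:ℝ))) atTop (nhds 0) := by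
      have he : m - (n:ℝ) = -((n:ℝ) - m) := by ring
      rw [he]
      exact tendsto_rpow_neg_atTop (by linarith)
    have h2 : Tendsto (fun r : ℝ => B * r⁻¹) atTop (nhds 0) := by
      simpa using tendsto_inv_atTop_zero.const_mul B
    simpa using (h1.const_mul CC).add h2
  have hev : ∀ᶠ r : ℝ in atTop, CC * r ^ (m - (n:ℝ)) + B * r⁻¹ < ‖Q.leadingCoeff‖ :=
    htend.eventually (eventually_lt_nhds hlead)
  obtain ⟨r, hrlt, hrge⟩ := (hev.and (eventually_ge_atTop (max RR 1))).exists
  have hr1 : (1:ℝ) ≤ r := le_trans (le_max_right _ _) hrge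
  have hrR : RR ≤ r := le_trans (le_max_left _ _) hrge
  have hr0 : (0:ℝ) < r := lt_of_lt_of_le one_pos hr1
  -- lower bound on the evaluation
  have heval : Q.eval (r : ℂ) = (∑ j ∈ range n, Q.coeff j * (r:ℂ) ^ j)
      + Q.leadingCoeff * (r:ℂ) ^ n := by
    rw [Polynomial.eval_eq_sum_range, Finset.sum_range_succ]
    rfl
  have htail : ‖∑ j ∈ range n, Q.coeff j * (r:ℂ) ^ j‖ ≤ B * (r ^ n * r⁻¹) := by
    rcases Nat.eq_zero_or_pos n with h0 | hpos
    · simp [h0, hB]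
    · calc ‖∑ j ∈ range n, Q.coeff j * (r:ℂ) ^ j‖
          ≤ ∑ j ∈ range n, ‖Q.coeff j‖ * r ^ j := by
            refine (norm_sum_le _ _).trans_eq ?_
            refine Finset.sum_congr rfl fun j _ => ?_
            rw [norm_mul, norm_pow, Complex.norm_real, Real.norm_of_nonneg hr0.le]
        _ ≤ ∑ j ∈ range n, ‖Q.coeff j‖ * r ^ (n-1) := by
            refine Finset.sum_le_sum fun j hj => ?_
            refine mul_le_mul_of_nonneg_left ?_ (norm_nonneg _)
            have hj' := Finset.mem_range.mp hj
            exact pow_le_pow_right₀ hr1 (by omega)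
        _ = B * r ^ (n-1) := by rw [← Finset.sum_mul]
        _ = B * (r ^ n * r⁻¹) := by
            congr 1
            rw [← Nat.sub_add_cancel hpos, pow_succ]
            field_simp
            simp
  have hmain : ‖Q.leadingCoeff‖ * r ^ n ≤ CC * r ^ m + B * (r ^ n * r⁻¹) := by
    have h1 : ‖Q.leadingCoeff * (r:ℂ) ^ n‖
        ≤ ‖Q.eval (r:ℂ)‖ + ‖∑ j ∈ range n, Q.coeff j * (r:ℂ) ^ j‖ := by
      have he : Q.leadingCoeff * (r:ℂ) ^ n
          = Q.eval (r:ℂ) - ∑ j ∈ range n, Q.coeff j * (r:ℂ) ^ j := by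
        rw [heval]; ring
      rw [he]
      exact norm_sub_le _ _
    have h2 : ‖Q.leadingCoeff * (r:ℂ) ^ n‖ = ‖Q.leadingCoeff‖ * r ^ n := by
      rw [norm_mul, norm_pow, Complex.norm_real, Real.norm_of_nonneg hr0.le]
    rw [h2] at h1
    exact h1.trans (add_le_add (hb r hrR) htail)
  -- divide by r ^ n
  have hrpow : (0:ℝ) < r ^ n := pow_pos hr0 n
  have hdiv : ‖Q.leadingCoeff‖ ≤ CC * r ^ (m - (n:ℝ)) + B * r⁻¹ := by
    have hrm : CC * r ^ m = (CC * r ^ (m - (n:ℝ))) * r ^ n := by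
      rw [mul_assoc, ← Real.rpow_natCast r n, ← Real.rpow_add hr0]
      ring_nf
    rw [hrm] at hmain
    have : ‖Q.leadingCoeff‖ * r ^ n ≤ (CC * r ^ (m - (n:ℝ)) + B * r⁻¹) * r ^ n := by
      calc ‖Q.leadingCoeff‖ * r ^ n
          ≤ CC * r ^ (m - (n:ℝ)) * r ^ n + B * (r ^ n * r⁻¹) := hmain
        _ = (CC * r ^ (m - (n:ℝ)) + B * r⁻¹) * r ^ n := by ring
    exact le_of_mul_le_mul_right this hrpow
  exact absurd (lt_of_le_of_lt hdiv hrlt) (lt_irrefl _)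


/-- Multivariate degree bound from growth. -/
lemma mv_deg_le (k : ℕ) (p : MvPolynomial (Fin k) ℂ) (m RR CC : ℝ) (hm : 0 ≤ m)
    (hb : ∀ x : Fin k → ℂ, RR ≤ ‖x‖ → ‖MvPolynomial.eval x p‖ ≤ CC * ‖x‖ ^ m) :
    (p.totalDegree : ℝ) ≤ m := by
  set n := p.totalDegree with hn
  rcases Nat.eq_zero_or_pos n with h0 | hnpos
  · rw [h0]; exact_mod_cast hm
  have hp0 : p ≠ 0 := by
    rintro rfl
    simp [MvPolynomial.totalDegree_zero] at hn
    omega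
  -- the top homogeneous component is nonzero
  have hsupp : p.support.Nonempty := by
    rw [Finset.nonempty_iff_ne_empty]
    intro he
    exact hp0 (MvPolynomial.support_eq_empty.mp he)
  obtain ⟨dm, hdm, hdeq⟩ := Finset.exists_mem_eq_sup p.support hsupp
      (fun s : (Fin k →₀ ℕ) => s.sum fun _ e => e)
  have hcomp : MvPolynomial.homogeneousComponent n p ≠ 0 := by
    intro hzero
    have : MvPolynomial.coeff dm (MvPolynomial.homogeneousComponent n p) = p.coeff dm := by
      rw [MvPolynomial.coeff_homogeneousComponent, if_pos]
      rw [hn, MvPolynomial.totalDegree, hdeq]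
      rfl
    rw [hzero] at this
    exact (MvPolynomial.mem_support_iff.mp hdm) (by simpa using this.symm)
  -- a point where it does not vanish
  have hvex : ∃ v : Fin k → ℂ, MvPolynomial.eval v (MvPolynomial.homogeneousComponent n p) ≠ 0 := by
    by_contra hall
    push_neg at hall
    exact hcomp (MvPolynomial.funext fun x => by simp [hall x])
  obtain ⟨v, hv⟩ := hvex
  have hhom := MvPolynomial.homogeneousComponent_isHomogeneous n p
  have hvne : v ≠ 0 := by
    rintro rfl
    have h1 : ((0:ℂ) • (0 : Fin k → ℂ)) = (0 : Fin k → ℂ) := by simp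
    have := eval_smul hhom 0 0
    rw [h1] at this
    rw [this, zero_pow (by omega)] at hv
    simp at hv
  have hvnorm : 0 < ‖v‖ := norm_pos_iff.mpr hvne
  -- the univariate restriction
  set Q : Polynomial ℂ := ∑ j ∈ range (n+1),
      Polynomial.C (MvPolynomial.eval v (MvPolynomial.homogeneousComponent j p))
        * Polynomial.X ^ j with hQ
  have hQeval : ∀ s : ℂ, Q.eval s = MvPolynomial.eval (s • v) p := by
    intro s
    conv_rhs => rw [← MvPolynomial.sum_homogeneousComponent p]
    rw [map_sum, hQ, Polynomial.eval_finset_sum]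
    refine Finset.sum_congr rfl fun j _ => ?_
    rw [eval_smul (MvPolynomial.homogeneousComponent_isHomogeneous j p) s v]
    rw [Polynomial.eval_mul, Polynomial.eval_C, Polynomial.eval_pow, Polynomial.eval_X]
    ring
  have hQcoeff : ∀ j, j ≤ n → Q.coeff j
      = MvPolynomial.eval v (MvPolynomial.homogeneousComponent j p) := by
    intro j hj
    rw [hQ, Polynomial.finset_sum_coeff]
    rw [Finset.sum_eq_single j]
    · simp
    · intro b _ hbj
      simp [Polynomial.coeff_C_mul, Polynomial.coeff_X_pow, Ne.symm hbj]
    · intro hj'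
      exact absurd (Finset.mem_range.mpr (by omega)) hj'
  have hQn : Q.coeff n ≠ 0 := by rw [hQcoeff n le_rfl]; exact hv
  have hQ0 : Q ≠ 0 := fun h => hQn (by simp [h])
  have hQdeg : Q.natDegree = n := by
    refine le_antisymm ?_ (Polynomial.le_natDegree_of_ne_zero hQn)
    refine (Polynomial.natDegree_sum_le _ _).trans ?_
    rw [Finset.fold_max_le]
    refine ⟨by omega, fun j hj => ?_⟩
    refine (Polynomial.natDegree_C_mul_le _ _).trans ?_
    rw [Polynomial.natDegree_X_pow]
    exact Nat.lt_succ_iff.mp (Finset.mem_range.mp hj)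
  -- growth bound for Q
  have hbQ : ∀ r : ℝ, max (RR / ‖v‖) 1 ≤ r →
      ‖Q.eval (r:ℂ)‖ ≤ (CC * ‖v‖ ^ m) * r ^ m := by
    intro r hr
    have hr1 : (1:ℝ) ≤ r := le_trans (le_max_right _ _) hr
    have hr0 : (0:ℝ) < r := lt_of_lt_of_le one_pos hr1
    have hxnorm : ‖(r:ℂ) • v‖ = r * ‖v‖ := by
      rw [norm_smul, Complex.norm_real, Real.norm_of_nonneg hr0.le]
    have hRx : RR ≤ ‖(r:ℂ) • v‖ := by
      rw [hxnorm]
      have := le_trans (le_max_left _ _) hr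
      calc RR = (RR / ‖v‖) * ‖v‖ := by field_simp
        _ ≤ r * ‖v‖ := mul_le_mul_of_nonneg_right this hvnorm.le
    have := hb _ hRx
    rw [← hQeval] at this
    refine this.trans ?_
    rw [hxnorm, Real.mul_rpow hr0.le hvnorm.le]
    ring_nf
    exact le_refl _
  have := uni_deg_le Q (CC * ‖v‖ ^ m) (max (RR / ‖v‖) 1) m hQ0 hbQ
  rwa [hQdeg] at this


end PloskiAux

open PloskiAux

theorem stmt_5 (k d : ℕ) (hd : 0 < d) (a : Fin d → MvPolynomial (Fin k) ℂ)
    (δ : ℝ)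
    (hδ : IsGreatest {r : ℝ | ∃ i : Fin d, r = ((a i).totalDegree : ℝ) / (i.1 + 1)} δ)
    (q : ℝ) (hq : 0 < q) :
    (∃ R C : ℝ, 0 < R ∧ 0 < C ∧ ∀ (x : Fin k → ℂ) (t : ℂ),
        t ^ d + ∑ i : Fin d, MvPolynomial.eval x (a i) * t ^ (d - 1 - i.1) = 0 →
        R ≤ ‖x‖ → ‖t‖ ≤ C * ‖x‖ ^ q)
      ↔ δ ≤ q := by
  constructor
  · -- forward: the zero bound forces δ ≤ q
    rintro ⟨R, C, hR, hC, hzero⟩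
    obtain ⟨i₀, hi₀⟩ := hδ.1
    rw [hi₀, div_le_iff₀ (by positivity)]
    have hle : ((a i₀).totalDegree : ℝ) ≤ q * (i₀.1 + 1) := by
      refine mv_deg_le k (a i₀) (q * (i₀.1 + 1)) (max R 1)
        ((2:ℝ) ^ d * (1 + C) ^ d) (by positivity) ?_
      intro x hx
      have hxR : R ≤ ‖x‖ := le_trans (le_max_left _ _) hx
      have hx1 : (1:ℝ) ≤ ‖x‖ := le_trans (le_max_right _ _) hx
      have hx0 : (0:ℝ) < ‖x‖ := lt_of_lt_of_le one_pos hx1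
      -- the univariate polynomial in t
      set f : Polynomial ℂ := Polynomial.X ^ d +
          ∑ i : Fin d, Polynomial.C (MvPolynomial.eval x (a i)) * Polynomial.X ^ (d - 1 - i.1)
        with hf
      have hsumdeg : (∑ i : Fin d, Polynomial.C (MvPolynomial.eval x (a i))
          * Polynomial.X ^ (d - 1 - i.1)).degree < (Polynomial.X ^ d : Polynomial ℂ).degree := by
        rw [Polynomial.degree_X_pow]
        refine lt_of_le_of_lt (Polynomial.degree_sum_le _ _) ?_
        rw [Finset.sup_lt_iff (bot_lt_iff_ne_bot.mpr (by simp))]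
        intro i _
        refine lt_of_le_of_lt (Polynomial.degree_C_mul_X_pow_le _ _) ?_
        rw [Nat.cast_lt]
        omega
      have hmono : f.Monic := (Polynomial.monic_X_pow d).add_of_left hsumdeg
      have hfdeg : f.natDegree = d := by
        have : f.degree = d := by
          rw [hf, Polynomial.degree_add_eq_left_of_degree_lt hsumdeg, Polynomial.degree_X_pow]
        exact Polynomial.natDegree_eq_of_degree_eq_some this
      have hf0 : f ≠ 0 := hmono.ne_zero
      have hsplits : f.Splits := IsAlgClosed.splits f
      have hcard : Multiset.card f.roots = d := by
        rw [Polynomial.splits_iff_card_roots.mp hsplits, hfdeg]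
      -- every root is small
      have hroots : ∀ z ∈ f.roots, ‖z‖ ≤ C * ‖x‖ ^ q := by
        intro z hz
        have hzr : f.eval z = 0 := (Polynomial.mem_roots hf0).mp hz
        have : z ^ d + ∑ i : Fin d, MvPolynomial.eval x (a i) * z ^ (d - 1 - i.1) = 0 := by
          rw [hf] at hzr
          simpa [Polynomial.eval_finset_sum] using hzr
        exact hzero x z this hxR
      -- the coefficient formula
      have hcoeff : f.coeff (d - 1 - i₀.1) = MvPolynomial.eval x (a i₀) := by
        rw [hf, Polynomial.coeff_add, Polynomial.coeff_X_pow, if_neg (by omega),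
          Polynomial.finset_sum_coeff, zero_add]
        rw [Finset.sum_eq_single i₀]
        · simp
        · intro b _ hb
          have hbv : b.1 ≠ i₀.1 := fun h => hb (Fin.ext h)
          have hb1 : b.1 < d := b.2
          have hi1 : i₀.1 < d := i₀.2
          simp only [Polynomial.coeff_C_mul, Polynomial.coeff_X_pow]
          rw [if_neg (by omega), mul_zero]
        · intro h
          exact absurd (Finset.mem_univ i₀) h
      -- Vieta
      have hprod : f = (f.roots.map fun r => Polynomial.X - Polynomial.C r).prod :=
        hsplits.eq_prod_roots_of_monic hmono
      have hvieta : f.coeff (d - 1 - i₀.1)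
          = (-1) ^ (i₀.1 + 1) * f.roots.esymm (i₀.1 + 1) := by
        have h1 : d - 1 - i₀.1 ≤ Multiset.card f.roots := by rw [hcard]; omega
        have h2 := Multiset.prod_X_sub_C_coeff f.roots h1
        rw [← hprod] at h2
        rw [h2, hcard]
        congr 2 <;> omega
      have hnormesymm : ‖MvPolynomial.eval x (a i₀)‖ = ‖f.roots.esymm (i₀.1 + 1)‖ := by
        rw [← hcoeff, hvieta, norm_mul, norm_pow, norm_neg, norm_one, one_pow, one_mul]
      -- combine
      have hbnd : ‖MvPolynomial.eval x (a i₀)‖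
          ≤ (d.choose (i₀.1+1) : ℝ) * (C * ‖x‖ ^ q) ^ (i₀.1 + 1) := by
        have hesb := esymm_bound f.roots (C * ‖x‖ ^ q) (by positivity) hroots (i₀.1+1)
        rw [hcard] at hesb
        rw [hnormesymm]
        exact hesb
      refine hbnd.trans ?_
      have hq1 : (C * ‖x‖ ^ q) ^ (i₀.1 + 1) = C ^ (i₀.1+1) * ‖x‖ ^ (q * (i₀.1 + 1)) := by
        rw [mul_pow]
        congr 1
        rw [← Real.rpow_natCast (‖x‖ ^ q) (i₀.1+1), ← Real.rpow_mul hx0.le]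
        push_cast
        ring_nf
      rw [hq1]
      have hc1 : (d.choose (i₀.1+1) : ℝ) ≤ (2:ℝ) ^ d := by
        exact_mod_cast choose_le d (i₀.1+1)
      have hc2 : C ^ (i₀.1+1) ≤ (1 + C) ^ d := by
        calc C ^ (i₀.1+1) ≤ (1+C) ^ (i₀.1+1) :=
              pow_le_pow_left₀ hC.le (by linarith) _
          _ ≤ (1+C) ^ d := pow_le_pow_right₀ (by linarith) (by omega)
      have hxq : (0:ℝ) ≤ ‖x‖ ^ (q * (i₀.1 + 1)) := Real.rpow_nonneg hx0.le _
      calc (d.choose (i₀.1+1) : ℝ) * (C ^ (i₀.1+1) * ‖x‖ ^ (q * (i₀.1 + 1)))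
          ≤ (2:ℝ)^d * ((1+C)^d * ‖x‖ ^ (q * (i₀.1 + 1))) := by
            refine mul_le_mul hc1 (mul_le_mul_of_nonneg_right hc2 hxq) (by positivity) (by positivity)
        _ = (2:ℝ)^d * (1+C)^d * ‖x‖ ^ (q * (i₀.1 + 1)) := by ring
    linarith [hle]
  · -- backward: δ ≤ q gives the zero bound
    intro hδq
    choose M hMpos hM using fun i => growth k (a i)
    set Mt : ℝ := ∑ i : Fin d, M i with hMt
    have hMtpos : 0 < Mt := Finset.sum_pos (fun i _ => hMpos i) ⟨⟨0, hd⟩, Finset.mem_univ _⟩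
    have hMle : ∀ i : Fin d, M i ≤ Mt := fun i =>
      Finset.single_le_sum (fun j _ => (hMpos j).le) (Finset.mem_univ i)
    refine ⟨1, 1 + d * Mt, one_pos, by positivity, fun x t hroot hx => ?_⟩
    have hx0 : (0:ℝ) < ‖x‖ := lt_of_lt_of_le one_pos hx
    have hxq1 : (1:ℝ) ≤ ‖x‖ ^ q := Real.one_le_rpow hx hq.le
    rcases lt_or_ge ‖t‖ 1 with ht1 | ht1
    · calc ‖t‖ ≤ 1 := ht1.le
        _ ≤ (1 + d * Mt) * 1 := by nlinarith
        _ ≤ (1 + d * Mt) * ‖x‖ ^ q := by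
            refine mul_le_mul_of_nonneg_left hxq1 (by positivity)
    · obtain ⟨i, hi⟩ := rootbound d hd (fun i => MvPolynomial.eval x (a i)) t hroot ht1
      set e : ℝ := ((i.1 + 1 : ℕ) : ℝ) with he
      have he0 : (0:ℝ) < e := by positivity
      have hbound : ‖t‖ ^ (i.1 + 1) ≤ (d * Mt) * ‖x‖ ^ ((a i).totalDegree) := by
        refine hi.trans ?_
        have h1 := hM i x hx
        calc (d:ℝ) * ‖MvPolynomial.eval x (a i)‖
            ≤ (d:ℝ) * (M i * ‖x‖ ^ (a i).totalDegree) :=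
              mul_le_mul_of_nonneg_left h1 (by positivity)
          _ ≤ (d:ℝ) * (Mt * ‖x‖ ^ (a i).totalDegree) := by
              refine mul_le_mul_of_nonneg_left ?_ (by positivity)
              exact mul_le_mul_of_nonneg_right (hMle i) (by positivity)
          _ = (d * Mt) * ‖x‖ ^ ((a i).totalDegree) := by ring
      -- take (i+1)-th root
      have ht0 : (0:ℝ) ≤ ‖t‖ := norm_nonneg _
      have hrpow : ‖t‖ ≤ ((d * Mt) * ‖x‖ ^ ((a i).totalDegree)) ^ (e⁻¹) := by
        have h2 : (‖t‖ ^ (i.1+1 : ℕ)) ^ (((i.1+1 : ℕ) : ℝ)⁻¹) ≤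
            ((d * Mt) * ‖x‖ ^ ((a i).totalDegree)) ^ (((i.1+1 : ℕ) : ℝ)⁻¹) := by
          refine Real.rpow_le_rpow (by positivity) hbound (by positivity)
        rwa [Real.pow_rpow_inv_natCast ht0 (by omega)] at h2
      refine hrpow.trans ?_
      have hsplit : ((d * Mt) * ‖x‖ ^ ((a i).totalDegree)) ^ (e⁻¹)
          = ((d:ℝ) * Mt) ^ (e⁻¹) * ‖x‖ ^ (((a i).totalDegree : ℝ) / e) := by
        rw [Real.mul_rpow (by positivity) (by positivity)]
        congr 1
        rw [← Real.rpow_natCast ‖x‖ ((a i).totalDegree), ← Real.rpow_mul hx0.le,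
          div_eq_mul_inv]
      rw [hsplit]
      have hfac1 : ((d:ℝ) * Mt) ^ (e⁻¹) ≤ 1 + d * Mt := by
        calc ((d:ℝ) * Mt) ^ (e⁻¹) ≤ (1 + d * Mt) ^ (e⁻¹) := by
              refine Real.rpow_le_rpow (by positivity) (by linarith) (by positivity)
          _ ≤ (1 + d * Mt) ^ (1:ℝ) := by
              refine Real.rpow_le_rpow_of_exponent_le ?_ ?_
              · have : (0:ℝ) < (d:ℝ) * Mt := by positivity
                linarith
              · have h1e : (1:ℝ) ≤ e := by
                  rw [he]; exact_mod_cast Nat.succ_le_succ (Nat.zero_le _)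
                rw [inv_le_one₀ he0]
                exact h1e
          _ = 1 + d * Mt := Real.rpow_one _
      have hfac2 : ‖x‖ ^ (((a i).totalDegree : ℝ) / e) ≤ ‖x‖ ^ q := by
        refine Real.rpow_le_rpow_of_exponent_le hx ?_
        have hmem : ((a i).totalDegree : ℝ) / (i.1 + 1) ≤ δ := hδ.2 ⟨i, rfl⟩
        have : ((a i).totalDegree : ℝ) / e = ((a i).totalDegree : ℝ) / (i.1 + 1) := by
          rw [he]; push_cast; ring_nf
        rw [this]
        linarith
      calc ((d:ℝ) * Mt) ^ (e⁻¹) * ‖x‖ ^ (((a i).totalDegree : ℝ) / e)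
          ≤ (1 + d * Mt) * ‖x‖ ^ q :=
            mul_le_mul hfac1 hfac2 (by positivity) (by positivity)
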